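/- arXiv:2104.07093 — 5 statements merged into one kernel-verified Lean document; each statement's English description precedes it below -/
import Mathlib

section
/- If B and C are positive bounded linear operators on a complex Hilbert space H, then ‖√B − √C‖ ≤ √(‖B − C‖), where √B and √C denote the unique positive square roots of B and C. -/
set_option synthInstance.maxHeartbeats 1000000
set_option maxHeartbeats 1000000

open scoped NNReal ENNReal

section Aux

lemma my_spectralRadius_diff {A : Type*} [NormedRing A] [NormedAlgebra ℂ A] (x : A) :
    spectralRadius ℂ x = ⨆ k ∈ spectrum ℂ x \ {0}, (‖k‖₊ : ℝ≥0∞) := by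
  rw [spectralRadius]
  apply le_antisymm
  · refine iSup₂_le fun k hk => ?_
    rcases eq_or_ne k 0 with rfl | h
    · simp
    · exact le_iSup₂ (f := fun k _ => (‖k‖₊ : ℝ≥0∞)) k ⟨hk, h⟩
  · exact iSup₂_le fun k hk => le_iSup₂ (f := fun k _ => (‖k‖₊ : ℝ≥0∞)) k hk.1

lemma my_spectralRadius_mul_comm {A : Type*} [NormedRing A] [NormedAlgebra ℂ A] (a b : A) :
    spectralRadius ℂ (a * b) = spectralRadius ℂ (b * a) := by
  rw [my_spectralRadius_diff, my_spectralRadius_diff, spectrum.nonzero_mul_comm]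

variable {A : Type*} [CStarAlgebra A] [PartialOrder A] [StarOrderedRing A]

lemma my_algebraMap_nonneg [Nontrivial A] {r : ℝ} (hr : 0 ≤ r) :
    (0 : A) ≤ algebraMap ℝ A r := by
  refine le_algebraMap_of_spectrum_le fun x hx => ?_
  rw [spectrum.zero_eq] at hx
  simp_all

lemma my_sqrt_le_sqrt_of_isUnit [Nontrivial A] {a b : A} (hbu : IsUnit b)
    (ha : 0 ≤ a) (hb : 0 ≤ b) (hab : a ≤ b) : CFC.sqrt a ≤ CFC.sqrt b := by
  lift b to Aˣ using hbu
  have h0 : (0 : ℝ≥0) ∉ spectrum ℝ≥0 (b : A) := spectrum.zero_notMem ℝ≥0 b.isUnit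
  have h1 : ‖CFC.sqrt a * (b : A) ^ (-(1 / 2) : ℝ)‖ ≤ 1 :=
    (le_iff_norm_sqrt_mul_rpow a (b : A) ha (IsStrictlyPositive.iff_of_unital.mpr ⟨hb, b.isUnit⟩)).mp hab
  -- sqrt b is a unit
  have hsb : CFC.sqrt (b : A) * ((b : A) ^ (-(1 / 2) : ℝ)) = 1 := by
    rw [CFC.sqrt_eq_rpow, ← CFC.rpow_add b.isUnit]
    norm_num
    exact CFC.rpow_zero _ hb
  have hsb' : ((b : A) ^ (-(1 / 2) : ℝ)) * CFC.sqrt (b : A) = 1 := by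
    rw [CFC.sqrt_eq_rpow, ← CFC.rpow_add b.isUnit]
    norm_num
    exact CFC.rpow_zero _ hb
  have hu : IsUnit (CFC.sqrt (b : A)) :=
    ⟨⟨CFC.sqrt (b : A), (b : A) ^ (-(1 / 2) : ℝ), hsb, hsb'⟩, rfl⟩
  rw [le_iff_norm_sqrt_mul_rpow _ _ (CFC.sqrt_nonneg _) (IsStrictlyPositive.iff_of_unital.mpr ⟨(CFC.sqrt_nonneg _), hu⟩)]
  set x := CFC.sqrt (CFC.sqrt a) with hx
  have hxx : x * x = CFC.sqrt a := CFC.sqrt_mul_sqrt_self _ (CFC.sqrt_nonneg _)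
  have hyeq : CFC.sqrt (b : A) ^ (-(1 / 2) : ℝ) = (b : A) ^ (-(1 / 4) : ℝ) := by
    rw [CFC.sqrt_eq_rpow, CFC.rpow_rpow (b : A) _ _ (by norm_num) (IsStrictlyPositive.iff_of_unital.mpr ⟨hb, b.isUnit⟩)]
    norm_num
  rw [hyeq]
  set y := (b : A) ^ (-(1 / 4) : ℝ) with hy
  have hyy : y * y = (b : A) ^ (-(1 / 2) : ℝ) := by
    rw [hy, ← CFC.rpow_add b.isUnit]
    norm_num
  have hxsa : IsSelfAdjoint x := .of_nonneg (CFC.sqrt_nonneg _)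
  have hysa : IsSelfAdjoint y := .of_nonneg CFC.rpow_nonneg
  set w := y * CFC.sqrt a * y with hw
  have hwnn : 0 ≤ w := conjugate_nonneg_of_nonneg (CFC.sqrt_nonneg _) CFC.rpow_nonneg
  have h2 : ‖x * y‖ * ‖x * y‖ = ‖w‖ := by
    rw [← CStarRing.norm_star_mul_self, star_mul, hxsa.star_eq, hysa.star_eq]
    congr 1
    rw [hw, ← hxx]
    noncomm_ring
  have h3 : (‖w‖₊ : ℝ≥0∞) ≤ 1 := by
    calc (‖w‖₊ : ℝ≥0∞) = spectralRadius ℂ w := ((IsSelfAdjoint.of_nonneg hwnn).spectralRadius_eq_nnnorm).symm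
      _ = spectralRadius ℂ ((CFC.sqrt a * y) * y) := by
          rw [hw, mul_assoc]; exact my_spectralRadius_mul_comm _ _
      _ = spectralRadius ℂ (CFC.sqrt a * (b : A) ^ (-(1 / 2) : ℝ)) := by
          rw [mul_assoc, hyy]
      _ ≤ ‖CFC.sqrt a * (b : A) ^ (-(1 / 2) : ℝ)‖₊ := spectrum.spectralRadius_le_nnnorm (𝕜 := ℂ) _
      _ ≤ 1 := by exact_mod_cast h1
  have h4 : ‖w‖ ≤ 1 := by
    have := ENNReal.coe_le_one_iff.mp h3
    exact_mod_cast this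
  nlinarith [norm_nonneg (x * y)]

lemma my_norm_le_of_bound {d : A} {s : ℝ} (hs : 0 ≤ s) (hd : IsSelfAdjoint d)
    (h1 : -(algebraMap ℝ A s) ≤ d) (h2 : d ≤ algebraMap ℝ A s) : ‖d‖ ≤ s := by
  rcases subsingleton_or_nontrivial A with h | h
  · simpa [Subsingleton.elim d 0] using hs
  rw [le_algebraMap_iff_spectrum_le] at h2
  rw [show -(algebraMap ℝ A s) = algebraMap ℝ A (-s) by simp, algebraMap_le_iff_le_spectrum] at h1
  rcases CStarAlgebra.norm_or_neg_norm_mem_spectrum hd with h | h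
  · exact h2 _ h
  · linarith [h1 _ h]

lemma my_sqrt_le_sqrt_add [Nontrivial A] {a b : A} {s : ℝ} (ha : 0 ≤ a) (hb : 0 ≤ b)
    (hs : 0 < s) (hab : a ≤ b + algebraMap ℝ A (s ^ 2)) :
    CFC.sqrt a ≤ CFC.sqrt b + algebraMap ℝ A s := by
  set c := CFC.sqrt b + algebraMap ℝ A s with hc
  have hc0 : 0 ≤ c := add_nonneg (CFC.sqrt_nonneg _) (my_algebraMap_nonneg hs.le)
  have hcsa : IsSelfAdjoint c := .of_nonneg hc0
  have hcc : c * c = b + ((2 * s) • CFC.sqrt b + algebraMap ℝ A (s ^ 2)) := by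
    rw [hc, add_mul, mul_add, mul_add, CFC.sqrt_mul_sqrt_self b hb, ← map_mul,
      ← Algebra.smul_def, ← Algebra.commutes s (CFC.sqrt b), ← Algebra.smul_def]
    rw [show s * s = s ^ 2 by ring, two_mul, add_smul]
    abel
  have hbcc : a ≤ c * c := by
    refine hab.trans ?_
    rw [hcc]
    have : (0 : A) ≤ (2 * s) • CFC.sqrt b := smul_nonneg (by positivity) (CFC.sqrt_nonneg _)
    exact add_le_add_right (le_add_of_nonneg_left this) b
  have hcu : IsUnit c := by
    refine CStarAlgebra.isUnit_of_le (algebraMap ℝ A s) ?_ (IsStrictlyPositive.iff_of_unital.mpr ⟨?_, ?_⟩)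
    · exact le_add_of_nonneg_left (CFC.sqrt_nonneg _)
    · exact my_algebraMap_nonneg hs.le
    · exact (isUnit_iff_ne_zero.mpr hs.ne').map (algebraMap ℝ A)
  have hccnn : 0 ≤ c * c := by
    simpa [hcsa.star_eq] using star_mul_self_nonneg c
  have := my_sqrt_le_sqrt_of_isUnit (hcu.mul hcu) ha hccnn hbcc
  rwa [CFC.sqrt_mul_self c hc0] at this
end Aux

open Filter Topology
open scoped InnerProductSpace

/-- If `B` and `C` are positive bounded linear operators on a complex Hilbert space `H`,
then `‖√B − √C‖ ≤ √‖B − C‖`, where `CFC.sqrt` is the unique positive square root. -/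
theorem sqrt_diff_norm_le_sqrt_norm_diff {H : Type*} [NormedAddCommGroup H]
    [InnerProductSpace ℂ H] [CompleteSpace H]
    (B C : H →L[ℂ] H) (hB : 0 ≤ B) (hC : 0 ≤ C) :
    ‖CFC.sqrt B - CFC.sqrt C‖ ≤ Real.sqrt ‖B - C‖ := by
  rcases subsingleton_or_nontrivial (H →L[ℂ] H) with h | h
  · simp [Subsingleton.elim (CFC.sqrt B - CFC.sqrt C) 0, Real.sqrt_nonneg]
  have key : ∀ ε > (0 : ℝ), ‖CFC.sqrt B - CFC.sqrt C‖ ^ 2 ≤ ‖B - C‖ + ε := by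
    intro ε hε
    set s := Real.sqrt (‖B - C‖ + ε) with hsdef
    have hs : 0 < s := Real.sqrt_pos.mpr (by positivity)
    have hs2 : s ^ 2 = ‖B - C‖ + ε := Real.sq_sqrt (by positivity)
    have hBsa : IsSelfAdjoint B := .of_nonneg hB
    have hCsa : IsSelfAdjoint C := .of_nonneg hC
    have hd : IsSelfAdjoint (CFC.sqrt B - CFC.sqrt C) :=
      (IsSelfAdjoint.of_nonneg (CFC.sqrt_nonneg _)).sub (.of_nonneg (CFC.sqrt_nonneg _))
    have hBC : B ≤ C + algebraMap ℝ (H →L[ℂ] H) (s ^ 2) := by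
      have h1 : B - C ≤ algebraMap ℝ (H →L[ℂ] H) ‖B - C‖ :=
        IsSelfAdjoint.le_algebraMap_norm_self (hBsa.sub hCsa)
      have h2 : algebraMap ℝ (H →L[ℂ] H) ‖B - C‖ ≤ algebraMap ℝ (H →L[ℂ] H) (s ^ 2) := by
        rw [← sub_nonneg, ← map_sub]
        exact my_algebraMap_nonneg (by nlinarith [hs2])
      have h3 := h1.trans h2
      rw [sub_le_iff_le_add, add_comm] at h3
      exact h3
    have hCB : C ≤ B + algebraMap ℝ (H →L[ℂ] H) (s ^ 2) := by
      have h1 : C - B ≤ algebraMap ℝ (H →L[ℂ] H) ‖C - B‖ :=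
        IsSelfAdjoint.le_algebraMap_norm_self (hCsa.sub hBsa)
      have h2 : algebraMap ℝ (H →L[ℂ] H) ‖C - B‖ ≤ algebraMap ℝ (H →L[ℂ] H) (s ^ 2) := by
        rw [← sub_nonneg, ← map_sub]
        rw [norm_sub_rev]
        exact my_algebraMap_nonneg (by nlinarith [hs2])
      have h3 := h1.trans h2
      rw [sub_le_iff_le_add, add_comm] at h3
      exact h3
    have k1 : CFC.sqrt B ≤ CFC.sqrt C + algebraMap ℝ (H →L[ℂ] H) s :=
      my_sqrt_le_sqrt_add hB hC hs hBC
    have k2 : CFC.sqrt C ≤ CFC.sqrt B + algebraMap ℝ (H →L[ℂ] H) s :=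
      my_sqrt_le_sqrt_add hC hB hs hCB
    have hnorm : ‖CFC.sqrt B - CFC.sqrt C‖ ≤ s := by
      refine my_norm_le_of_bound hs.le hd ?_ ?_
      · rw [neg_le, neg_sub, sub_le_iff_le_add, add_comm]
        exact k2
      · rw [sub_le_iff_le_add, add_comm]
        exact k1
    calc ‖CFC.sqrt B - CFC.sqrt C‖ ^ 2 ≤ s ^ 2 := by
          exact pow_le_pow_left₀ (norm_nonneg _) hnorm 2
      _ = ‖B - C‖ + ε := hs2
  have h2 : ‖CFC.sqrt B - CFC.sqrt C‖ ^ 2 ≤ ‖B - C‖ := le_of_forall_pos_le_add key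
  calc ‖CFC.sqrt B - CFC.sqrt C‖ = Real.sqrt (‖CFC.sqrt B - CFC.sqrt C‖ ^ 2) :=
        (Real.sqrt_sq (norm_nonneg _)).symm
    _ ≤ Real.sqrt ‖B - C‖ := Real.sqrt_le_sqrt h2
end

section
/- Let (A_n) be a sequence of self-adjoint bounded linear operators and (B_n) a sequence of positive bounded linear operators on a complex Hilbert space H. Suppose there is a positive operator M ∈ B(H) such that |A_n| ≤ M for all n, that A_n B_n = B_n A_n and B_n M = M B_n for all n, and that (B_n) converges weakly to 0. Then (A_n B_n) converges weakly to 0. -/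
set_option synthInstance.maxHeartbeats 1000000
set_option maxHeartbeats 1000000

open Filter Topology
open scoped InnerProductSpace

/-- If `(Aₙ)` are self-adjoint with `|Aₙ| ≤ M` (`M` positive), `(Bₙ)` are positive,
`AₙBₙ = BₙAₙ`, `BₙM = MBₙ`, and `Bₙ → 0` weakly, then `AₙBₙ → 0` weakly. -/
theorem mul_weak_tendsto_zero {H : Type*} [NormedAddCommGroup H]
    [InnerProductSpace ℂ H] [CompleteSpace H]
    (A B : ℕ → H →L[ℂ] H) (M : H →L[ℂ] H)
    (hA : ∀ n, IsSelfAdjoint (A n)) (hB : ∀ n, 0 ≤ B n) (hM : 0 ≤ M)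
    (habs : ∀ n, CFC.sqrt (star (A n) * A n) ≤ M)
    (hcomm : ∀ n, A n * B n = B n * A n)
    (hcommM : ∀ n, B n * M = M * B n)
    (hconv : ∀ x y : H, Tendsto (fun n => ⟪B n x, y⟫_ℂ) atTop (𝓝 0)) :
    ∀ x y : H, Tendsto (fun n => ⟪(A n * B n) x, y⟫_ℂ) atTop (𝓝 0) := by
    -- Step 1: uniform bound on ‖B n‖ via Banach–Steinhaus (twice)
  have hBx : ∀ z : H, ∃ C, ∀ n, ‖B n z‖ ≤ C := by
    intro z
    have h1 : ∀ w : H, ∃ C, ∀ n, ‖(innerSL ℂ (B n z)) w‖ ≤ C := by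
      intro w
      obtain ⟨C, hC⟩ := ((hconv z w).norm).bddAbove_range
      exact ⟨C, fun n => by
        simpa [innerSL_apply_apply] using hC (Set.mem_range_self (f := fun n => ‖⟪B n z, w⟫_ℂ‖) n)⟩
    obtain ⟨C', hC'⟩ := banach_steinhaus h1
    exact ⟨C', fun n => by simpa [innerSL_apply_norm] using hC' n⟩
  obtain ⟨K, hK⟩ := banach_steinhaus hBx
  have hK0 : 0 ≤ K := le_trans (norm_nonneg _) (hK 0)
  -- Step 2: ∀ n z, ‖A n z‖ ≤ ‖M‖ * ‖z‖
  have hAnorm : ∀ n (z : H), ‖A n z‖ ≤ ‖M‖ * ‖z‖ := by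
    intro n z
    set T : H →L[ℂ] H := CFC.sqrt (star (A n) * A n) with hT
    have hstar : (0 : H →L[ℂ] H) ≤ star (A n) * A n := star_mul_self_nonneg _
    have hT0 : (0 : H →L[ℂ] H) ≤ T := CFC.sqrt_nonneg _
    have hTsa : IsSelfAdjoint T := .of_nonneg hT0
    have hT2 : T * T = star (A n) * A n := CFC.sqrt_mul_sqrt_self _ hstar
    have key : ‖A n z‖ = ‖T z‖ := by
      have h1 : ⟪A n z, A n z⟫_ℂ = ⟪(star (A n) * A n) z, z⟫_ℂ := by
        rw [(hA n).star_eq, ContinuousLinearMap.mul_apply]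
        exact ((hA n).isSymmetric (A n z) z).symm
      have h2 : ⟪T z, T z⟫_ℂ = ⟪(star (A n) * A n) z, z⟫_ℂ := by
        rw [← hT2, ContinuousLinearMap.mul_apply]
        exact (hTsa.isSymmetric (T z) z).symm
      have h3 : ‖A n z‖ ^ 2 = ‖T z‖ ^ 2 := by
        rw [← inner_self_eq_norm_sq (𝕜 := ℂ), ← inner_self_eq_norm_sq (𝕜 := ℂ), h1, h2]
      calc ‖A n z‖ = Real.sqrt (‖A n z‖ ^ 2) := (Real.sqrt_sq (norm_nonneg _)).symm
        _ = Real.sqrt (‖T z‖ ^ 2) := by rw [h3]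
        _ = ‖T z‖ := Real.sqrt_sq (norm_nonneg _)
    have hTM : ‖T‖ ≤ ‖M‖ := CStarAlgebra.norm_le_norm_of_nonneg_of_le hT0 (habs n)
    calc ‖A n z‖ = ‖T z‖ := key
      _ ≤ ‖T‖ * ‖z‖ := T.le_opNorm z
      _ ≤ ‖M‖ * ‖z‖ := mul_le_mul_of_nonneg_right hTM (norm_nonneg z)
  -- Step 3: main estimate
  intro x y
  set D : ℝ := Real.sqrt (K * (‖M‖ * ‖y‖) ^ 2) with hD
  have bound : ∀ n, ‖⟪(A n * B n) x, y⟫_ℂ‖ ≤ Real.sqrt (Complex.re ⟪B n x, x⟫_ℂ) * D := by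
    intro n
    set S : H →L[ℂ] H := CFC.sqrt (B n) with hS
    have hS0 : (0 : H →L[ℂ] H) ≤ S := CFC.sqrt_nonneg _
    have hSsa : IsSelfAdjoint S := .of_nonneg hS0
    have hS2 : S * S = B n := CFC.sqrt_mul_sqrt_self _ (hB n)
    have happ : ∀ z : H, B n z = S (S z) := by
      intro z; rw [← hS2]; rfl
    have hSnorm : ∀ z : H, ‖S z‖ = Real.sqrt (Complex.re ⟪B n z, z⟫_ℂ) := by
      intro z
      have h2 : ⟪S z, S z⟫_ℂ = ⟪B n z, z⟫_ℂ := by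
        rw [happ z]
        exact (hSsa.isSymmetric (S z) z).symm
      have : ‖S z‖ ^ 2 = Complex.re ⟪B n z, z⟫_ℂ := by
        rw [← h2]; exact (inner_self_eq_norm_sq (𝕜 := ℂ) (S z)).symm
      rw [← this, Real.sqrt_sq (norm_nonneg _)]
    have heq : ⟪(A n * B n) x, y⟫_ℂ = ⟪S x, S (A n y)⟫_ℂ := by
      calc ⟪(A n * B n) x, y⟫_ℂ = ⟪B n x, A n y⟫_ℂ := by
            rw [ContinuousLinearMap.mul_apply]; exact (hA n).isSymmetric (B n x) y
        _ = ⟪S (S x), A n y⟫_ℂ := by rw [happ x]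
        _ = ⟪S x, S (A n y)⟫_ℂ := hSsa.isSymmetric (S x) (A n y)
    have hSAy : ‖S (A n y)‖ ≤ D := by
      have h1 : ‖S (A n y)‖ = Real.sqrt (Complex.re ⟪B n (A n y), A n y⟫_ℂ) := hSnorm _
      have h2 : Complex.re ⟪B n (A n y), A n y⟫_ℂ ≤ K * (‖M‖ * ‖y‖) ^ 2 := by
        have := norm_inner_le_norm (𝕜 := ℂ) (B n (A n y)) (A n y)
        have hre : Complex.re ⟪B n (A n y), A n y⟫_ℂ ≤ ‖⟪B n (A n y), A n y⟫_ℂ‖ :=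
          Complex.re_le_norm _
        have hBA : ‖B n (A n y)‖ ≤ K * ‖A n y‖ :=
          le_trans ((B n).le_opNorm _) (mul_le_mul_of_nonneg_right (hK n) (norm_nonneg _))
        have hAy : ‖A n y‖ ≤ ‖M‖ * ‖y‖ := hAnorm n y
        have hAy0 : (0:ℝ) ≤ ‖A n y‖ := norm_nonneg _
        calc Complex.re ⟪B n (A n y), A n y⟫_ℂ ≤ ‖⟪B n (A n y), A n y⟫_ℂ‖ := hre
          _ ≤ ‖B n (A n y)‖ * ‖A n y‖ := this
          _ ≤ (K * ‖A n y‖) * ‖A n y‖ := mul_le_mul_of_nonneg_right hBA hAy0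
          _ = K * ‖A n y‖ ^ 2 := by ring
          _ ≤ K * (‖M‖ * ‖y‖) ^ 2 :=
              mul_le_mul_of_nonneg_left (pow_le_pow_left₀ hAy0 hAy 2) hK0
      rw [h1, hD]
      exact Real.sqrt_le_sqrt h2
    calc ‖⟪(A n * B n) x, y⟫_ℂ‖ = ‖⟪S x, S (A n y)⟫_ℂ‖ := by rw [heq]
      _ ≤ ‖S x‖ * ‖S (A n y)‖ := norm_inner_le_norm _ _
      _ ≤ Real.sqrt (Complex.re ⟪B n x, x⟫_ℂ) * D := by
          rw [hSnorm x]
          exact mul_le_mul_of_nonneg_left hSAy (Real.sqrt_nonneg _)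
  have hlim : Tendsto (fun n => Real.sqrt (Complex.re ⟪B n x, x⟫_ℂ) * D) atTop (𝓝 0) := by
    have h1 : Tendsto (fun n => Complex.re ⟪B n x, x⟫_ℂ) atTop (𝓝 0) := by
      simpa [Function.comp_def] using (Complex.continuous_re.tendsto 0).comp (hconv x x)
    have h2 : Tendsto (fun n => Real.sqrt (Complex.re ⟪B n x, x⟫_ℂ)) atTop (𝓝 0) := by
      simpa [Function.comp_def] using (Real.continuous_sqrt.tendsto 0).comp h1
    simpa using h2.mul_const D
  exact squeeze_zero_norm bound hlim
end

section
/- Let (A_n) be a sequence of self-adjoint bounded linear operators and (B_n) a sequence of positive bounded linear operators on a complex Hilbert space H. Suppose there is α ≥ 0 such that |A_n| ≤ α·I for all n (I being the identity operator), that A_n B_n = B_n A_n for all n, and that (B_n) converges weakly to 0. Then (A_n B_n) converges weakly to 0. -/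
set_option synthInstance.maxHeartbeats 1000000
set_option maxHeartbeats 1000000

open Filter Topology
open scoped InnerProductSpace

/-- If `(Aₙ)` are self-adjoint with `|Aₙ| ≤ α•I` for some `α ≥ 0`, `(Bₙ)` are positive,
`AₙBₙ = BₙAₙ`, and `Bₙ → 0` weakly, then `AₙBₙ → 0` weakly. -/
theorem mul_weak_tendsto_zero_of_abs_le_smul_id {H : Type*} [NormedAddCommGroup H]
    [InnerProductSpace ℂ H] [CompleteSpace H]
    (A B : ℕ → H →L[ℂ] H) (α : ℝ) (hα : 0 ≤ α)
    (hA : ∀ n, IsSelfAdjoint (A n)) (hB : ∀ n, 0 ≤ B n)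
    (habs : ∀ n, CFC.sqrt (star (A n) * A n) ≤ α • (1 : H →L[ℂ] H))
    (hcomm : ∀ n, A n * B n = B n * A n)
    (hconv : ∀ x y : H, Tendsto (fun n => ⟪B n x, y⟫_ℂ) atTop (𝓝 0)) :
    ∀ x y : H, Tendsto (fun n => ⟪(A n * B n) x, y⟫_ℂ) atTop (𝓝 0) := by
  -- ‖A n y‖ ≤ α * ‖y‖
  have hAnorm : ∀ n (y : H), ‖A n y‖ ≤ α * ‖y‖ := by
    intro n y
    set T : H →L[ℂ] H := CFC.sqrt (star (A n) * A n) with hTdef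
    have hTpos : (0 : H →L[ℂ] H) ≤ T := CFC.sqrt_nonneg _
    have hTsa : IsSelfAdjoint T :=
      ((ContinuousLinearMap.nonneg_iff_isPositive T).mp hTpos).isSelfAdjoint
    have hTadj : ContinuousLinearMap.adjoint T = T :=
      ContinuousLinearMap.isSelfAdjoint_iff'.mp hTsa
    have hTnorm : ‖T‖ ≤ α := by
      have h1 : ‖T‖ ≤ ‖α • (1 : H →L[ℂ] H)‖ :=
        CStarAlgebra.norm_le_norm_of_nonneg_of_le hTpos (habs n)
      have h2 : ‖α • (1 : H →L[ℂ] H)‖ ≤ α := by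
        rw [norm_smul, Real.norm_eq_abs, abs_of_nonneg hα]
        calc α * ‖(1 : H →L[ℂ] H)‖ ≤ α * 1 := by
              gcongr
              exact ContinuousLinearMap.norm_id_le
          _ = α := mul_one α
      exact h1.trans h2
    have hTT : T * T = star (A n) * A n := CFC.sqrt_mul_sqrt_self _ (star_mul_self_nonneg _)
    have hsq : ‖A n y‖ ^ 2 = ‖T y‖ ^ 2 := by
      have e1 : (⟪A n y, A n y⟫_ℂ) = ⟪T y, T y⟫_ℂ := by
        have hAadj : ContinuousLinearMap.adjoint (A n) = A n :=
          ContinuousLinearMap.isSelfAdjoint_iff'.mp (hA n)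
        calc (⟪A n y, A n y⟫_ℂ) = ⟪ContinuousLinearMap.adjoint (A n) (A n y), y⟫_ℂ := by
              rw [ContinuousLinearMap.adjoint_inner_left]
          _ = ⟪(star (A n) * A n) y, y⟫_ℂ := by
              rw [ContinuousLinearMap.star_eq_adjoint, ContinuousLinearMap.mul_apply, hAadj]
          _ = ⟪(T * T) y, y⟫_ℂ := by rw [hTT]
          _ = ⟪ContinuousLinearMap.adjoint T (T y), y⟫_ℂ := by rw [hTadj]; rfl
          _ = ⟪T y, T y⟫_ℂ := by rw [ContinuousLinearMap.adjoint_inner_left]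
      rw [inner_self_eq_norm_sq_to_K, inner_self_eq_norm_sq_to_K] at e1
      exact_mod_cast e1
    have : ‖A n y‖ = ‖T y‖ := by
      nlinarith [norm_nonneg (A n y), norm_nonneg (T y)]
    rw [this]
    calc ‖T y‖ ≤ ‖T‖ * ‖y‖ := T.le_opNorm y
      _ ≤ α * ‖y‖ := by gcongr
  -- uniform bound on ‖B n‖
  obtain ⟨M, hM⟩ : ∃ M, ∀ n, ‖B n‖ ≤ M := by
    apply banach_steinhaus
    intro x
    have hpt : ∀ y : H, ∃ C, ∀ n, ‖(innerSL ℂ (B n x)) y‖ ≤ C := by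
      intro y
      obtain ⟨C, hC⟩ := (hconv x y).norm.bddAbove_range
      exact ⟨C, fun n => hC (Set.mem_range_self n)⟩
    obtain ⟨C, hC⟩ := banach_steinhaus hpt
    refine ⟨C, fun n => ?_⟩
    simpa [innerSL_apply_norm] using hC n
  have hM0 : 0 ≤ M := (norm_nonneg (B 0)).trans (hM 0)
  intro x y
  -- S n := sqrt (B n)
  set S : ℕ → H →L[ℂ] H := fun n => CFC.sqrt (B n) with hSdef
  have hSadj : ∀ n, ContinuousLinearMap.adjoint (S n) = S n := fun n =>
    ContinuousLinearMap.isSelfAdjoint_iff'.mp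
      (((ContinuousLinearMap.nonneg_iff_isPositive (S n)).mp (CFC.sqrt_nonneg _)).isSelfAdjoint)
  have hSS : ∀ n, S n * S n = B n := fun n => CFC.sqrt_mul_sqrt_self _ (hB n)
  have hSinner : ∀ n (u : H), (⟪S n u, S n u⟫_ℂ) = ⟪B n u, u⟫_ℂ := by
    intro n u
    calc (⟪S n u, S n u⟫_ℂ) = ⟪ContinuousLinearMap.adjoint (S n) (S n u), u⟫_ℂ := by
          rw [ContinuousLinearMap.adjoint_inner_left]
      _ = ⟪B n u, u⟫_ℂ := by rw [hSadj n, ← ContinuousLinearMap.mul_apply, hSS n]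
  have hSnormsq : ∀ n (u : H), ‖S n u‖ ^ 2 = Complex.re (⟪B n u, u⟫_ℂ) := by
    intro n u
    rw [← hSinner n u, inner_self_eq_norm_sq_to_K]
    norm_cast
  -- ‖S n u‖ ≤ √M ‖u‖
  have hSbd : ∀ n (u : H), ‖S n u‖ ≤ Real.sqrt M * ‖u‖ := by
    intro n u
    have h1 : ‖S n u‖ ^ 2 ≤ M * ‖u‖ ^ 2 := by
      rw [hSnormsq n u]
      calc Complex.re (⟪B n u, u⟫_ℂ) ≤ ‖(⟪B n u, u⟫_ℂ)‖ := Complex.re_le_norm _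
        _ ≤ ‖B n u‖ * ‖u‖ := norm_inner_le_norm _ _
        _ ≤ (‖B n‖ * ‖u‖) * ‖u‖ := by gcongr; exact (B n).le_opNorm u
        _ ≤ (M * ‖u‖) * ‖u‖ := by gcongr; exact hM n
        _ = M * ‖u‖ ^ 2 := by ring
    have h2 : (Real.sqrt M * ‖u‖) ^ 2 = M * ‖u‖ ^ 2 := by
      rw [mul_pow, Real.sq_sqrt hM0]
    nlinarith [norm_nonneg (S n u), Real.sqrt_nonneg M, norm_nonneg u,
      mul_nonneg (Real.sqrt_nonneg M) (norm_nonneg u)]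
  -- key bound
  have key : ∀ n, ‖(⟪(A n * B n) x, y⟫_ℂ)‖ ≤ ‖S n x‖ * (Real.sqrt M * (α * ‖y‖)) := by
    intro n
    have hAadj : ContinuousLinearMap.adjoint (A n) = A n :=
      ContinuousLinearMap.isSelfAdjoint_iff'.mp (hA n)
    have e : (⟪(A n * B n) x, y⟫_ℂ) = ⟪S n x, S n (A n y)⟫_ℂ := by
      calc (⟪(A n * B n) x, y⟫_ℂ) = ⟪A n (B n x), y⟫_ℂ := rfl
        _ = ⟪ContinuousLinearMap.adjoint (A n) (B n x), y⟫_ℂ := by rw [hAadj]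
        _ = ⟪B n x, A n y⟫_ℂ := by rw [ContinuousLinearMap.adjoint_inner_left]
        _ = ⟪S n (S n x), A n y⟫_ℂ := by rw [← ContinuousLinearMap.mul_apply, hSS n]
        _ = ⟪ContinuousLinearMap.adjoint (S n) (S n x), A n y⟫_ℂ := by rw [hSadj n]
        _ = ⟪S n x, S n (A n y)⟫_ℂ := by rw [ContinuousLinearMap.adjoint_inner_left]
    rw [e]
    calc ‖(⟪S n x, S n (A n y)⟫_ℂ)‖ ≤ ‖S n x‖ * ‖S n (A n y)‖ := norm_inner_le_norm _ _
      _ ≤ ‖S n x‖ * (Real.sqrt M * ‖A n y‖) := by gcongr; exact hSbd n _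
      _ ≤ ‖S n x‖ * (Real.sqrt M * (α * ‖y‖)) := by
          gcongr <;> first | exact hAnorm n y | positivity
  -- ‖S n x‖ → 0
  have hSx : Tendsto (fun n => ‖S n x‖) atTop (𝓝 0) := by
    have h1 : Tendsto (fun n => Complex.re (⟪B n x, x⟫_ℂ)) atTop (𝓝 0) := by
      simpa [Function.comp_def] using (Complex.continuous_re.tendsto 0).comp (hconv x x)
    have h2 : Tendsto (fun n => Real.sqrt (Complex.re (⟪B n x, x⟫_ℂ))) atTop (𝓝 0) := by
      simpa [Function.comp_def] using (Real.continuous_sqrt.tendsto 0).comp h1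
    have h3 : ∀ n, ‖S n x‖ = Real.sqrt (Complex.re (⟪B n x, x⟫_ℂ)) := by
      intro n
      rw [← hSnormsq n x, Real.sqrt_sq (norm_nonneg _)]
    simpa [h3] using h2
  rw [show (fun n => ⟪(A n * B n) x, y⟫_ℂ) = fun n => ⟪(A n * B n) x, y⟫_ℂ from rfl]
  rw [tendsto_zero_iff_norm_tendsto_zero]
  have hb : Tendsto (fun n => ‖S n x‖ * (Real.sqrt M * (α * ‖y‖))) atTop (𝓝 0) := by
    simpa using hSx.mul_const (Real.sqrt M * (α * ‖y‖))
  exact squeeze_zero (fun n => norm_nonneg _) key hb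
end

section
/- Let (A_n) and (B_n) be two sequences of positive bounded linear operators on a complex Hilbert space H such that A_n B_n = B_n A_n for all n. If both (A_n) and (B_n) converge weakly to 0, then (A_n B_n) converges weakly to 0. -/
set_option synthInstance.maxHeartbeats 1000000
set_option maxHeartbeats 1000000

open Filter Topology
open scoped InnerProductSpace

/-- A weakly convergent (to `0`) sequence of operators is norm-bounded
(Banach–Steinhaus, applied twice). -/
lemma norm_bdd_of_weak_tendsto_zero {H : Type*} [NormedAddCommGroup H]
    [InnerProductSpace ℂ H] [CompleteSpace H] (T : ℕ → H →L[ℂ] H)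
    (h : ∀ x y : H, Tendsto (fun n => ⟪T n x, y⟫_ℂ) atTop (𝓝 0)) :
    ∃ M : ℝ, ∀ n, ‖T n‖ ≤ M := by
  apply banach_steinhaus
  intro x
  have hpt : ∀ y : H, ∃ C : ℝ, ∀ n, ‖(innerSL ℂ (T n x)) y‖ ≤ C := by
    intro y
    have : Tendsto (fun n => ‖⟪T n x, y⟫_ℂ‖) atTop (𝓝 0) := by
      simpa using (h x y).norm
    obtain ⟨C, hC⟩ := this.bddAbove_range
    exact ⟨C, fun n => hC ⟨n, rfl⟩⟩
  obtain ⟨C, hC⟩ := banach_steinhaus hpt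
  exact ⟨C, fun n => by simpa [innerSL_apply_norm] using hC n⟩

/-- If `(Aₙ)` and `(Bₙ)` are commuting sequences of positive operators, both converging
weakly to `0`, then `(AₙBₙ)` converges weakly to `0`. -/
theorem mul_weak_tendsto_zero_of_pos {H : Type*} [NormedAddCommGroup H]
    [InnerProductSpace ℂ H] [CompleteSpace H]
    (A B : ℕ → H →L[ℂ] H)
    (hA : ∀ n, 0 ≤ A n) (hB : ∀ n, 0 ≤ B n)
    (hcomm : ∀ n, A n * B n = B n * A n)
    (hAconv : ∀ x y : H, Tendsto (fun n => ⟪A n x, y⟫_ℂ) atTop (𝓝 0))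
    (hBconv : ∀ x y : H, Tendsto (fun n => ⟪B n x, y⟫_ℂ) atTop (𝓝 0)) :
    ∀ x y : H, Tendsto (fun n => ⟪(A n * B n) x, y⟫_ℂ) atTop (𝓝 0) := by
  intro x y
  obtain ⟨MA, hMA⟩ := norm_bdd_of_weak_tendsto_zero A hAconv
  obtain ⟨MB, hMB⟩ := norm_bdd_of_weak_tendsto_zero B hBconv
  -- square roots of the `A n`
  set s : ℕ → H →L[ℂ] H := fun n => CFC.sqrt (A n) with hs
  have hs_nonneg : ∀ n, 0 ≤ s n := fun n => CFC.sqrt_nonneg (A n)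
  have hs_sa : ∀ n, IsSelfAdjoint (s n) := fun n => IsSelfAdjoint.of_nonneg (hs_nonneg n)
  have hA_sa : ∀ n, IsSelfAdjoint (A n) := fun n => IsSelfAdjoint.of_nonneg (hA n)
  have hs_mul : ∀ n, s n * s n = A n := fun n => CFC.sqrt_mul_sqrt_self (A n) (hA n)
  -- adjoint facts
  have sa_inner : ∀ (T : H →L[ℂ] H), IsSelfAdjoint T → ∀ u v : H, ⟪T u, v⟫_ℂ = ⟪u, T v⟫_ℂ := by
    intro T hT u v
    conv_lhs => rw [← hT.adjoint_eq]
    exact ContinuousLinearMap.adjoint_inner_left T v u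
  -- norm of s n squared
  have hs_norm_sq : ∀ n (v : H), ‖s n v‖ ^ 2 = Complex.re ⟪A n v, v⟫_ℂ := by
    intro n v
    have : ⟪A n v, v⟫_ℂ = ⟪s n v, s n v⟫_ℂ := by
      rw [← hs_mul n]
      have : (s n * s n) v = s n (s n v) := rfl
      rw [this, sa_inner (s n) (hs_sa n)]
    rw [this]
    exact (inner_self_eq_norm_sq (𝕜 := ℂ) _).symm
  -- norm bound for s n
  have hs_norm : ∀ n, ‖s n‖ ≤ Real.sqrt MA := by
    intro n
    have h1 : ‖s n‖ ^ 2 = ‖A n‖ := by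
      have := CStarRing.norm_star_mul_self (x := s n)
      rw [(hs_sa n).star_eq, hs_mul n] at this
      rw [this]; ring
    have h2 : ‖s n‖ ^ 2 ≤ MA := h1 ▸ hMA n
    calc ‖s n‖ = Real.sqrt (‖s n‖ ^ 2) := by rw [Real.sqrt_sq (norm_nonneg _)]
    _ ≤ Real.sqrt MA := Real.sqrt_le_sqrt h2
  -- key pointwise bound
  have key : ∀ n, ‖⟪(A n * B n) x, y⟫_ℂ‖ ≤
      Real.sqrt MA * (MB * ‖x‖) * ‖s n y‖ := by
    intro n
    have e1 : ⟪(A n * B n) x, y⟫_ℂ = ⟪s n (B n x), s n y⟫_ℂ := by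
      have : (A n * B n) x = A n (B n x) := rfl
      rw [this, sa_inner (A n) (hA_sa n), ← hs_mul n]
      have : (s n * s n) y = s n (s n y) := rfl
      rw [this, ← sa_inner (s n) (hs_sa n)]
    rw [e1]
    calc ‖⟪s n (B n x), s n y⟫_ℂ‖ ≤ ‖s n (B n x)‖ * ‖s n y‖ := norm_inner_le_norm _ _
    _ ≤ Real.sqrt MA * (MB * ‖x‖) * ‖s n y‖ := by
        apply mul_le_mul_of_nonneg_right _ (norm_nonneg _)
        calc ‖s n (B n x)‖ ≤ ‖s n‖ * ‖B n x‖ := (s n).le_opNorm _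
        _ ≤ Real.sqrt MA * (MB * ‖x‖) := by
            apply mul_le_mul (hs_norm n) _ (norm_nonneg _) (Real.sqrt_nonneg _)
            calc ‖B n x‖ ≤ ‖B n‖ * ‖x‖ := (B n).le_opNorm _
            _ ≤ MB * ‖x‖ := mul_le_mul_of_nonneg_right (hMB n) (norm_nonneg _)
  -- ‖s n y‖ → 0
  have hsy : Tendsto (fun n => ‖s n y‖) atTop (𝓝 0) := by
    have h1 : Tendsto (fun n => Complex.re ⟪A n y, y⟫_ℂ) atTop (𝓝 0) := by
      simpa [Function.comp_def] using (Complex.continuous_re.tendsto 0).comp (hAconv y y)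
    have h2 : Tendsto (fun n => Real.sqrt (Complex.re ⟪A n y, y⟫_ℂ)) atTop (𝓝 0) := by
      simpa [Function.comp_def] using (Real.continuous_sqrt.tendsto 0).comp h1
    refine h2.congr fun n => ?_
    rw [← hs_norm_sq n y, Real.sqrt_sq (norm_nonneg _)]
  rw [tendsto_zero_iff_norm_tendsto_zero]
  have hlim : Tendsto (fun n => Real.sqrt MA * (MB * ‖x‖) * ‖s n y‖) atTop (𝓝 0) := by
    simpa using hsy.const_mul (Real.sqrt MA * (MB * ‖x‖))
  exact squeeze_zero (fun n => norm_nonneg _) key hlim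
end

section
/- Let S be the unilateral shift on ℓ²(ℕ; ℂ), and set A_n = Sⁿ + (Sⁿ)*. Then (A_n) converges weakly to 0, but the sequence of absolute values (|A_n|) does not converge weakly to 0. In particular, weak convergence of a sequence of self-adjoint operators to 0 does not imply weak convergence of their absolute values to 0. -/
set_option synthInstance.maxHeartbeats 1000000
set_option maxHeartbeats 1000000

open Filter Topology
open scoped InnerProductSpace

instance lp_two_complex_clm_nonUnitalCFC_real :
    NonUnitalContinuousFunctionalCalculus ℝ
      (lp (fun _ : ℕ => ℂ) 2 →L[ℂ] lp (fun _ : ℕ => ℂ) 2) IsSelfAdjoint :=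
  IsSelfAdjoint.instNonUnitalContinuousFunctionalCalculus

instance lp_two_complex_clm_CFC_real :
    ContinuousFunctionalCalculus ℝ
      (lp (fun _ : ℕ => ℂ) 2 →L[ℂ] lp (fun _ : ℕ => ℂ) 2) IsSelfAdjoint :=
  IsSelfAdjoint.instContinuousFunctionalCalculus

/-- For the unilateral shift `S` on `ℓ²(ℕ; ℂ)` (characterized by `(Sf)₀ = 0` and
`(Sf)ₖ₊₁ = fₖ`), the self-adjoint operators `Aₙ = Sⁿ + (Sⁿ)*` converge weakly to `0`,
but their absolute values `|Aₙ| = √(Aₙ*Aₙ)` do not converge weakly to `0`. -/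
theorem shift_sum_adjoint_weak_null_but_abs_not
    (S : lp (fun _ : ℕ => ℂ) 2 →L[ℂ] lp (fun _ : ℕ => ℂ) 2)
    (hS : ∀ f : lp (fun _ : ℕ => ℂ) 2, (S f) 0 = 0 ∧ ∀ k, (S f) (k + 1) = f k) :
    (∀ x y : lp (fun _ : ℕ => ℂ) 2,
      Tendsto (fun n : ℕ => ⟪(S ^ n + star (S ^ n)) x, y⟫_ℂ) atTop (𝓝 0)) ∧
    ¬ (∀ x y : lp (fun _ : ℕ => ℂ) 2,
      Tendsto
        (fun n : ℕ =>
          ⟪CFC.sqrt (star (S ^ n + star (S ^ n)) * (S ^ n + star (S ^ n))) x, y⟫_ℂ)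
        atTop (𝓝 0)) := by
  classical
  -- S on basis vectors
  have hsingle : ∀ k : ℕ, S (lp.single 2 k (1:ℂ)) = lp.single 2 (k+1) (1:ℂ) := by
    intro k
    apply lp.ext
    funext j
    match j with
    | 0 =>
      rw [(hS _).1]
      exact (lp.single_apply_ne (E := fun _ : ℕ => ℂ) 2 (k+1) (1:ℂ) (j := 0) (by omega)).symm
    | (m+1) =>
      rw [(hS _).2 m]
      by_cases h : m = k
      · subst h
        rw [lp.single_apply_self, lp.single_apply_self]
      · rw [lp.single_apply_ne (E := fun _ : ℕ => ℂ) 2 k (1:ℂ) (j := m) h,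
          lp.single_apply_ne (E := fun _ : ℕ => ℂ) 2 (k+1) (1:ℂ) (j := m+1) (by omega)]
  -- coordinates of the adjoint
  have hstar : ∀ (y : lp (fun _ : ℕ => ℂ) 2) (k : ℕ), ((star S) y) k = y (k+1) := by
    intro y k
    have h1 : ⟪lp.single 2 k (1:ℂ), (star S) y⟫_ℂ = ((star S) y) k := by
      rw [lp.inner_single_left]
      simp [RCLike.inner_apply]
    have h2 : ⟪lp.single 2 k (1:ℂ), (star S) y⟫_ℂ = y (k+1) := by
      rw [ContinuousLinearMap.star_eq_adjoint, ContinuousLinearMap.adjoint_inner_right,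
        hsingle, lp.inner_single_left]
      simp [RCLike.inner_apply]
    rw [← h1, h2]
  have hstarpow : ∀ (n : ℕ) (y : lp (fun _ : ℕ => ℂ) 2) (k : ℕ),
      (((star S)^n) y) k = y (k+n) := by
    intro n
    induction n with
    | zero => intro y k; simp
    | succ n ih =>
      intro y k
      rw [pow_succ, ContinuousLinearMap.mul_apply, ih, hstar]
      congr 1
  -- S* S = 1
  have hss : ∀ f : lp (fun _ : ℕ => ℂ) 2, (star S) (S f) = f := by
    intro f
    apply lp.ext
    funext k
    rw [hstar (S f) k, (hS f).2 k]
  -- S^n is an isometry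
  have hiso1 : ∀ f : lp (fun _ : ℕ => ℂ) 2, ‖S f‖ = ‖f‖ := by
    intro f
    have h : ⟪S f, S f⟫_ℂ = ⟪f, f⟫_ℂ := by
      rw [← ContinuousLinearMap.adjoint_inner_right S f (S f),
        ← ContinuousLinearMap.star_eq_adjoint, hss]
    rw [inner_self_eq_norm_sq_to_K, inner_self_eq_norm_sq_to_K] at h
    have h3 : ‖S f‖^2 = ‖f‖^2 := by exact_mod_cast h
    calc ‖S f‖ = Real.sqrt (‖S f‖^2) := (Real.sqrt_sq (norm_nonneg _)).symm
      _ = Real.sqrt (‖f‖^2) := by rw [h3]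
      _ = ‖f‖ := Real.sqrt_sq (norm_nonneg _)
  have hiso : ∀ (n : ℕ) (f : lp (fun _ : ℕ => ℂ) 2), ‖(S^n) f‖ = ‖f‖ := by
    intro n
    induction n with
    | zero => intro f; simp
    | succ n ih =>
      intro f
      rw [pow_succ', ContinuousLinearMap.mul_apply, hiso1, ih]
  -- tails go to zero
  have htail : ∀ z : lp (fun _ : ℕ => ℂ) 2,
      Tendsto (fun n : ℕ => ‖((star S)^n) z‖) atTop (𝓝 0) := by
    intro z
    have hp : (0:ℝ) < (2 : ENNReal).toReal := by norm_num
    have hsq : ∀ n : ℕ, ‖((star S)^n) z‖ ^ ((2:ENNReal).toReal)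
        = ∑' k, ‖z (k+n)‖ ^ ((2:ENNReal).toReal) := by
      intro n
      rw [lp.norm_rpow_eq_tsum hp (((star S)^n) z)]
      exact tsum_congr fun k => by rw [hstarpow n z k]
    have h0 : Tendsto (fun n : ℕ => ∑' k, ‖z (k+n)‖ ^ ((2:ENNReal).toReal)) atTop (𝓝 0) :=
      tendsto_sum_nat_add (fun m => ‖z m‖ ^ ((2:ENNReal).toReal))
    have h1 : Tendsto (fun n : ℕ => ‖((star S)^n) z‖ ^ ((2:ENNReal).toReal)) atTop (𝓝 0) := by
      simpa only [hsq] using h0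
    have h2 := (Real.continuous_sqrt.tendsto' 0 0 (by simp)).comp h1
    refine h2.congr fun n => ?_
    show Real.sqrt (‖((star S)^n) z‖ ^ ((2:ENNReal).toReal)) = _
    rw [show ((2:ENNReal).toReal) = ((2:ℕ):ℝ) by norm_num, Real.rpow_natCast,
      Real.sqrt_sq (norm_nonneg _)]
  constructor
  · -- weak convergence to 0
    intro x y
    have hterm1 : Tendsto (fun n : ℕ => ⟪(S^n) x, y⟫_ℂ) atTop (𝓝 0) := by
      rw [tendsto_zero_iff_norm_tendsto_zero]
      refine squeeze_zero (g := fun n => ‖x‖ * ‖((star S)^n) y‖)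
        (fun n => norm_nonneg _) (fun n => ?_) ?_
      · calc ‖⟪(S^n) x, y⟫_ℂ‖ = ‖⟪x, (star (S^n)) y⟫_ℂ‖ := by
              rw [ContinuousLinearMap.star_eq_adjoint, ContinuousLinearMap.adjoint_inner_right]
          _ ≤ ‖x‖ * ‖(star (S^n)) y‖ := norm_inner_le_norm _ _
          _ = ‖x‖ * ‖((star S)^n) y‖ := by rw [star_pow]
      · simpa using (htail y).const_mul ‖x‖
    have hterm2 : Tendsto (fun n : ℕ => ⟪(star (S^n)) x, y⟫_ℂ) atTop (𝓝 0) := by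
      rw [tendsto_zero_iff_norm_tendsto_zero]
      refine squeeze_zero (g := fun n => ‖((star S)^n) x‖ * ‖y‖)
        (fun n => norm_nonneg _) (fun n => ?_) ?_
      · calc ‖⟪(star (S^n)) x, y⟫_ℂ‖ ≤ ‖(star (S^n)) x‖ * ‖y‖ := norm_inner_le_norm _ _
          _ = ‖((star S)^n) x‖ * ‖y‖ := by rw [star_pow]
      · simpa using (htail x).mul_const ‖y‖
    have h := hterm1.add hterm2
    simp only [add_zero] at h
    refine h.congr fun n => ?_
    rw [ContinuousLinearMap.add_apply, inner_add_left]
  · -- |Aₙ| does not converge weakly to 0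
    intro hcon
    set e : lp (fun _ : ℕ => ℂ) 2 := lp.single 2 0 (1:ℂ) with he
    have hne : ‖e‖ = 1 := by
      have h2 : ⟪e, e⟫_ℂ = 1 := by
        rw [he, lp.inner_single_left]
        simp [RCLike.inner_apply, lp.single_apply_self]
      rw [inner_self_eq_norm_sq_to_K] at h2
      have h3 : ‖e‖^2 = 1 := by
        rw [← RCLike.ofReal_pow] at h2
        have h4 := congrArg RCLike.re h2
        rw [RCLike.ofReal_re, RCLike.one_re] at h4
        exact h4
      calc ‖e‖ = Real.sqrt (‖e‖^2) := (Real.sqrt_sq (norm_nonneg _)).symm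
        _ = 1 := by rw [h3]; simp
    haveI : Nontrivial (lp (fun _ : ℕ => ℂ) 2) := by
      refine ⟨e, 0, fun h => ?_⟩
      rw [h] at hne
      simp at hne
    have hpowsingle : ∀ n : ℕ, (S^n) e = lp.single 2 n (1:ℂ) := by
      intro n
      induction n with
      | zero => simp [he]
      | succ n ih =>
        rw [pow_succ', ContinuousLinearMap.mul_apply, ih, hsingle]
    have key : ∀ n : ℕ, 1 ≤ n →
        (1:ℝ) ≤ 2 * RCLike.re
          ⟪(CFC.sqrt (star (S ^ n + star (S ^ n)) * (S ^ n + star (S ^ n)))) e, e⟫_ℂ := by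
      intro n hn
      set T := S ^ n + star (S ^ n) with hT
      have hB : (0 : lp (fun _ : ℕ => ℂ) 2 →L[ℂ] lp (fun _ : ℕ => ℂ) 2) ≤ star T * T :=
        star_mul_self_nonneg T
      set Q := CFC.sqrt (star T * T) with hQdef
      have hQ : 0 ≤ Q := CFC.sqrt_nonneg _
      have hQsa : IsSelfAdjoint Q := .of_nonneg hQ
      have hQsq : Q ^ 2 = star T * T := CFC.sq_sqrt _ hB
      have h1 : (star (S^n)) e = 0 := by
        apply lp.ext
        funext k
        rw [star_pow, hstarpow n e k, he]
        rw [lp.single_apply_ne (E := fun _ : ℕ => ℂ) 2 0 (1:ℂ) (j := k+n) (by omega)]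
        simp
      have hTe : T e = lp.single 2 n (1:ℂ) := by
        rw [hT, ContinuousLinearMap.add_apply, hpowsingle n, h1, add_zero]
      have hBe : ⟪(star T * T) e, e⟫_ℂ = 1 := by
        rw [ContinuousLinearMap.mul_apply, ContinuousLinearMap.star_eq_adjoint,
          ContinuousLinearMap.adjoint_inner_left, hTe, lp.inner_single_left]
        simp [RCLike.inner_apply, lp.single_apply_self]
      have hTnorm : ‖T‖ ≤ 2 := by
        have h1 : ‖S^n‖ ≤ 1 :=
          ContinuousLinearMap.opNorm_le_bound _ zero_le_one (fun f => by
            rw [hiso n f, one_mul])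
        calc ‖T‖ ≤ ‖S^n‖ + ‖star (S^n)‖ := norm_add_le _ _
          _ = ‖S^n‖ + ‖S^n‖ := by
              rw [ContinuousLinearMap.star_eq_adjoint,
                LinearIsometryEquiv.norm_map ContinuousLinearMap.adjoint (S^n)]
          _ ≤ 2 := by linarith
      have hQnorm : ‖Q‖ ≤ 2 := by
        have h1 : ‖Q‖ * ‖Q‖ = ‖star Q * Q‖ := (CStarRing.norm_star_mul_self).symm
        have h2 : star Q * Q = Q ^ 2 := by rw [hQsa.star_eq, sq]
        have h3 : ‖star T * T‖ ≤ 4 := by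
          calc ‖star T * T‖ ≤ ‖star T‖ * ‖T‖ := norm_mul_le _ _
            _ = ‖T‖ * ‖T‖ := by
              rw [ContinuousLinearMap.star_eq_adjoint,
                LinearIsometryEquiv.norm_map ContinuousLinearMap.adjoint T]
            _ ≤ 4 := by nlinarith [norm_nonneg T]
        have h4 : ‖Q‖ * ‖Q‖ ≤ 4 := by rw [h1, h2, hQsq]; exact h3
        nlinarith [norm_nonneg Q]
      -- the operator inequality Q² ≤ ‖Q‖ • Q
      have hopineq : Q ^ 2 ≤ ‖Q‖ • Q := by
        rw [← cfc_pow_id (R := ℝ) Q 2, ← cfc_const_mul_id (R := ℝ) ‖Q‖ Q]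
        refine cfc_mono fun x hx => ?_
        have hx0 : 0 ≤ x := spectrum_nonneg_of_nonneg hQ hx
        have hx1 : x ≤ ‖Q‖ := (Real.le_norm_self x).trans (spectrum.norm_le_norm_of_mem hx)
        nlinarith
      have hpos : ((‖Q‖ • Q) - Q ^ 2).IsPositive :=
        (ContinuousLinearMap.le_def _ _).mp hopineq
      have h5 := hpos.inner_nonneg_left e
      have hQpos := ((ContinuousLinearMap.nonneg_iff_isPositive Q).mp hQ).inner_nonneg_left e
      have hsm : RCLike.re ⟪(‖Q‖ • Q) e, e⟫_ℂ = ‖Q‖ * RCLike.re ⟪Q e, e⟫_ℂ := by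
        rw [RCLike.real_smul_eq_coe_smul (K := ℂ) ‖Q‖ Q, ContinuousLinearMap.smul_apply,
          inner_smul_left, RCLike.conj_ofReal, RCLike.re_ofReal_mul]
      have h6 : RCLike.re ⟪(Q^2) e, e⟫_ℂ ≤ ‖Q‖ * RCLike.re ⟪Q e, e⟫_ℂ := by
        simp only [ContinuousLinearMap.sub_apply, inner_sub_left, map_sub] at h5
        replace h5 := (RCLike.nonneg_iff (K := ℂ)).mp h5 |>.1
        rw [map_sub] at h5
        rw [hsm] at h5
        linarith
      have h7 : RCLike.re ⟪(Q^2) e, e⟫_ℂ = 1 := by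
        rw [hQsq, hBe]
        simp
      have h8 : ‖Q‖ * RCLike.re ⟪Q e, e⟫_ℂ ≤ 2 * RCLike.re ⟪Q e, e⟫_ℂ :=
        mul_le_mul_of_nonneg_right hQnorm ((RCLike.nonneg_iff (K := ℂ)).mp hQpos).1
      linarith
    have hre := (Complex.continuous_re.tendsto (0:ℂ)).comp (hcon e e)
    rw [Complex.zero_re] at hre
    have hlt := Filter.Tendsto.eventually_lt_const (show (0:ℝ) < 1/2 by norm_num) hre
    obtain ⟨n, hn1, hn2⟩ := ((eventually_ge_atTop 1).and hlt).exists
    have hk := key n hn1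
    rw [RCLike.re_to_complex] at hk
    simp only [Function.comp_apply] at hn2
    linarith
end
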